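/- Let S be the 3-tensor of an obtuse random variable X in C^N, i.e. S^{ij}_k = E[X^i X^j conj(X^k)] for i,j,k = 0,...,N with X^0 = 1. Then: (a) S^{i0}_k = δ_{ik}; (b) S^{ij}_k is symmetric in (i,j); (c) ∑_m S^{im}_j S^{kl}_m is symmetric in (i,k); (d) ∑_m S^{im}_j conj(S^{lm}_k) is symmetric in (i,k). -/

import Mathlib

open scoped BigOperators InnerProductSpace ComplexConjugate

/-- The extended coordinate vector of an obtuse random variable at the sample point
`ω`: `X^0 = 1` together with the coordinates of the value `v ω ∈ ℂ^N`. -/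
def hatv {N : ℕ} (v : Fin (N + 1) → EuclideanSpace ℂ (Fin N))
    (ω : Fin (N + 1)) : Fin (N + 1) → ℂ :=
  Fin.cons 1 (fun k => v ω k)

/-- The 3-tensor of an obtuse random variable: `S^{ij}_k = E[X^i X^j conj(X^k)]`. -/
noncomputable def tensorS {N : ℕ} (p : Fin (N + 1) → ℝ)
    (v : Fin (N + 1) → EuclideanSpace ℂ (Fin N)) (i j k : Fin (N + 1)) : ℂ :=
  ∑ ω, (p ω : ℂ) * (hatv v ω i * hatv v ω j * (starRingEnd ℂ) (hatv v ω k))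

lemma hatv_zero {N : ℕ} (v : Fin (N + 1) → EuclideanSpace ℂ (Fin N)) (ω : Fin (N + 1)) :
    hatv v ω 0 = 1 := rfl

lemma hatv_succ {N : ℕ} (v : Fin (N + 1) → EuclideanSpace ℂ (Fin N)) (ω : Fin (N + 1))
    (k : Fin N) : hatv v ω k.succ = v ω k := rfl

/-- Orthonormality over ω of the extended coordinates. -/
lemma orth_aux {N : ℕ} (v : Fin (N + 1) → EuclideanSpace ℂ (Fin N))
    (p : Fin (N + 1) → ℝ) (hp1 : ∑ i, p i = 1)
    (hc : ∀ k, ∑ i, (p i : ℂ) * v i k = 0)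
    (hn : ∀ k l, ∑ i, (p i : ℂ) * ((starRingEnd ℂ) (v i k) * v i l)
        = if k = l then 1 else 0) (i k : Fin (N + 1)) :
    ∑ ω, (p ω : ℂ) * (hatv v ω i * (starRingEnd ℂ) (hatv v ω k))
      = if i = k then 1 else 0 := by
  induction i using Fin.cases with
  | zero =>
    induction k using Fin.cases with
    | zero =>
      simp only [hatv_zero, map_one, mul_one, if_true, eq_self_iff_true]
      exact_mod_cast hp1
    | succ k =>
      have h := congrArg (starRingEnd ℂ) (hc k)
      simp only [map_sum, map_mul, Complex.conj_ofReal, map_zero] at h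
      simpa [hatv_zero, hatv_succ, (Fin.succ_ne_zero k).symm] using h
  | succ i =>
    induction k using Fin.cases with
    | zero =>
      simpa [hatv_zero, hatv_succ] using hc i
    | succ k =>
      have h := hn k i
      have : ∑ ω, (p ω : ℂ) * (hatv v ω i.succ * (starRingEnd ℂ) (hatv v ω k.succ))
          = ∑ ω, (p ω : ℂ) * ((starRingEnd ℂ) (v ω k) * v ω i) := by
        refine Finset.sum_congr rfl fun ω _ => ?_
        simp [hatv_succ, mul_comm]
      rw [this, h]
      simp [Fin.succ_inj, eq_comm]

/-- Completeness relation over m. -/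
lemma key_aux {N : ℕ} (v : Fin (N + 1) → EuclideanSpace ℂ (Fin N))
    (p : Fin (N + 1) → ℝ) (hp : ∀ i, 0 < p i) (hp1 : ∑ i, p i = 1)
    (hc : ∀ k, ∑ i, (p i : ℂ) * v i k = 0)
    (hn : ∀ k l, ∑ i, (p i : ℂ) * ((starRingEnd ℂ) (v i k) * v i l)
        = if k = l then 1 else 0) (ω ω' : Fin (N + 1)) :
    ∑ m, hatv v ω m * (starRingEnd ℂ) (hatv v ω' m)
      = if ω = ω' then ((p ω : ℂ))⁻¹ else 0 := by
  have hstar : ∀ (r : ℝ) (z : ℂ), star ((r : ℂ) * z) = (r : ℂ) * (starRingEnd ℂ) z := by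
    intro r z
    simp [← starRingEnd_apply, map_mul, Complex.conj_ofReal]
  set A : Matrix (Fin (N + 1)) (Fin (N + 1)) ℂ :=
    Matrix.of fun ω m => ((Real.sqrt (p ω) : ℝ) : ℂ) * hatv v ω m with hA
  have h1 : A.conjTranspose * A = 1 := by
    ext m m'
    simp only [Matrix.mul_apply, Matrix.conjTranspose_apply, hA, Matrix.of_apply,
      Matrix.one_apply, starRingEnd_apply]
    have key : ∀ ω : Fin (N + 1),
        star (((Real.sqrt (p ω) : ℝ) : ℂ) * hatv v ω m)
          * (((Real.sqrt (p ω) : ℝ) : ℂ) * hatv v ω m')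
        = (p ω : ℂ) * (hatv v ω m' * (starRingEnd ℂ) (hatv v ω m)) := by
      intro ω
      have hq : ((Real.sqrt (p ω) : ℂ)) * ((Real.sqrt (p ω) : ℂ)) = (p ω : ℂ) := by
        rw [← Complex.ofReal_mul, Real.mul_self_sqrt (hp ω).le]
      rw [hstar, ← hq]
      ring
    rw [Finset.sum_congr rfl fun ω _ => key ω, orth_aux v p hp1 hc hn m' m]
    simp [eq_comm]
  have h2 : A * A.conjTranspose = 1 := mul_eq_one_comm.mp h1
  have h3 := congrFun (congrFun h2 ω) ω'
  simp only [Matrix.mul_apply, Matrix.conjTranspose_apply, hA, Matrix.of_apply,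
    Matrix.one_apply] at h3
  have h4 : (Real.sqrt (p ω) : ℂ) * (Real.sqrt (p ω') : ℂ)
      * ∑ m, hatv v ω m * (starRingEnd ℂ) (hatv v ω' m)
      = if ω = ω' then 1 else 0 := by
    rw [Finset.mul_sum, ← h3]
    refine Finset.sum_congr rfl fun m _ => ?_
    rw [hstar]
    ring
  have hs : ∀ τ : Fin (N + 1), ((Real.sqrt (p τ) : ℂ)) ≠ 0 := fun τ =>
    Complex.ofReal_ne_zero.mpr (Real.sqrt_ne_zero'.mpr (hp τ))
  by_cases h : ω = ω'
  · subst h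
    rw [if_pos rfl] at h4 ⊢
    have h5 : ((Real.sqrt (p ω) : ℂ)) * ((Real.sqrt (p ω) : ℂ)) = (p ω : ℂ) := by
      rw [← Complex.ofReal_mul, Real.mul_self_sqrt (hp ω).le]
    rw [h5] at h4
    exact (inv_eq_of_mul_eq_one_right h4).symm
  · rw [if_neg h] at h4 ⊢
    rcases mul_eq_zero.mp h4 with h' | h'
    · exact absurd (mul_eq_zero.mp h') (by push_neg; exact ⟨hs ω, hs ω'⟩)
    · exact h'

theorem obtuse_tensor_symmetries (N : ℕ)
    (v : Fin (N + 1) → EuclideanSpace ℂ (Fin N)) (hv : Function.Injective v)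
    (p : Fin (N + 1) → ℝ) (hp : ∀ i, 0 < p i) (hp1 : ∑ i, p i = 1)
    (hc : ∀ k, ∑ i, (p i : ℂ) * v i k = 0)
    (hn : ∀ k l, ∑ i, (p i : ℂ) * ((starRingEnd ℂ) (v i k) * v i l)
        = if k = l then 1 else 0) :
    (∀ i k, tensorS p v i 0 k = if i = k then 1 else 0) ∧
    (∀ i j k, tensorS p v i j k = tensorS p v j i k) ∧
    (∀ i j k l, ∑ m, tensorS p v i m j * tensorS p v k l m
        = ∑ m, tensorS p v k m j * tensorS p v i l m) ∧
    (∀ i j k l, ∑ m, tensorS p v i m j * (starRingEnd ℂ) (tensorS p v l m k)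
        = ∑ m, tensorS p v k m j * (starRingEnd ℂ) (tensorS p v l m i)) := by
  have key := key_aux v p hp hp1 hc hn
  have orth := orth_aux v p hp1 hc hn
  have hpne : ∀ ω, (p ω : ℂ) ≠ 0 := fun ω => Complex.ofReal_ne_zero.mpr (hp ω).ne'
  -- collapsing a double sum using the completeness relation
  have collapse : ∀ c : Fin (N + 1) → Fin (N + 1) → ℂ,
      (∑ ω, ∑ ω', c ω ω' * ∑ m, hatv v ω m * (starRingEnd ℂ) (hatv v ω' m))
        = ∑ ω, c ω ω * ((p ω : ℂ))⁻¹ := by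
    intro c
    refine Finset.sum_congr rfl fun ω _ => ?_
    calc ∑ ω', c ω ω' * ∑ m, hatv v ω m * (starRingEnd ℂ) (hatv v ω' m)
        = ∑ ω', c ω ω' * (if ω = ω' then ((p ω : ℂ))⁻¹ else 0) :=
          Finset.sum_congr rfl fun ω' _ => by rw [key ω ω']
      _ = c ω ω * ((p ω : ℂ))⁻¹ := by
          simp [mul_ite, Finset.sum_ite_eq]
  -- part (c) helper
  have hc3 : ∀ i j k l, ∑ m, tensorS p v i m j * tensorS p v k l m
      = ∑ ω, (p ω : ℂ) * (hatv v ω i * hatv v ω k * hatv v ω l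
          * (starRingEnd ℂ) (hatv v ω j)) := by
    intro i j k l
    simp only [tensorS]
    calc ∑ m, (∑ ω, (p ω : ℂ) * (hatv v ω i * hatv v ω m * (starRingEnd ℂ) (hatv v ω j)))
            * (∑ ω', (p ω' : ℂ) * (hatv v ω' k * hatv v ω' l * (starRingEnd ℂ) (hatv v ω' m)))
        = ∑ m, ∑ ω, ∑ ω',
            ((p ω : ℂ) * (hatv v ω i * hatv v ω m * (starRingEnd ℂ) (hatv v ω j)))
            * ((p ω' : ℂ) * (hatv v ω' k * hatv v ω' l * (starRingEnd ℂ) (hatv v ω' m))) :=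
          Finset.sum_congr rfl fun m _ => Finset.sum_mul_sum _ _ _ _
      _ = ∑ ω, ∑ m, ∑ ω', _ := Finset.sum_comm
      _ = ∑ ω, ∑ ω', ∑ m,
            ((p ω : ℂ) * (hatv v ω i * hatv v ω m * (starRingEnd ℂ) (hatv v ω j)))
            * ((p ω' : ℂ) * (hatv v ω' k * hatv v ω' l * (starRingEnd ℂ) (hatv v ω' m))) :=
          Finset.sum_congr rfl fun ω _ => Finset.sum_comm
      _ = ∑ ω, ∑ ω',
            ((p ω : ℂ) * (p ω' : ℂ) * (hatv v ω i * (starRingEnd ℂ) (hatv v ω j)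
              * (hatv v ω' k * hatv v ω' l)))
            * ∑ m, hatv v ω m * (starRingEnd ℂ) (hatv v ω' m) := by
          refine Finset.sum_congr rfl fun ω _ => Finset.sum_congr rfl fun ω' _ => ?_
          rw [Finset.mul_sum]
          exact Finset.sum_congr rfl fun m _ => by ring
      _ = ∑ ω, ((p ω : ℂ) * (p ω : ℂ) * (hatv v ω i * (starRingEnd ℂ) (hatv v ω j)
              * (hatv v ω k * hatv v ω l))) * ((p ω : ℂ))⁻¹ := collapse _
      _ = ∑ ω, (p ω : ℂ) * (hatv v ω i * hatv v ω k * hatv v ω l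
              * (starRingEnd ℂ) (hatv v ω j)) := by
          refine Finset.sum_congr rfl fun ω _ => ?_
          field_simp [hpne ω]
  -- part (d) helper
  have hconj : ∀ l m k, (starRingEnd ℂ) (tensorS p v l m k)
      = ∑ ω', (p ω' : ℂ) * ((starRingEnd ℂ) (hatv v ω' l)
          * (starRingEnd ℂ) (hatv v ω' m) * hatv v ω' k) := by
    intro l m k
    simp [tensorS, map_sum, map_mul, Complex.conj_ofReal]
  have hd3 : ∀ i j k l, ∑ m, tensorS p v i m j * (starRingEnd ℂ) (tensorS p v l m k)
      = ∑ ω, (p ω : ℂ) * (hatv v ω i * hatv v ω k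
          * (starRingEnd ℂ) (hatv v ω j) * (starRingEnd ℂ) (hatv v ω l)) := by
    intro i j k l
    simp only [hconj]
    simp only [tensorS]
    calc ∑ m, (∑ ω, (p ω : ℂ) * (hatv v ω i * hatv v ω m * (starRingEnd ℂ) (hatv v ω j)))
            * (∑ ω', (p ω' : ℂ) * ((starRingEnd ℂ) (hatv v ω' l)
                * (starRingEnd ℂ) (hatv v ω' m) * hatv v ω' k))
        = ∑ m, ∑ ω, ∑ ω',
            ((p ω : ℂ) * (hatv v ω i * hatv v ω m * (starRingEnd ℂ) (hatv v ω j)))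
            * ((p ω' : ℂ) * ((starRingEnd ℂ) (hatv v ω' l)
                * (starRingEnd ℂ) (hatv v ω' m) * hatv v ω' k)) :=
          Finset.sum_congr rfl fun m _ => Finset.sum_mul_sum _ _ _ _
      _ = ∑ ω, ∑ m, ∑ ω', _ := Finset.sum_comm
      _ = ∑ ω, ∑ ω', ∑ m,
            ((p ω : ℂ) * (hatv v ω i * hatv v ω m * (starRingEnd ℂ) (hatv v ω j)))
            * ((p ω' : ℂ) * ((starRingEnd ℂ) (hatv v ω' l)
                * (starRingEnd ℂ) (hatv v ω' m) * hatv v ω' k)) :=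
          Finset.sum_congr rfl fun ω _ => Finset.sum_comm
      _ = ∑ ω, ∑ ω',
            ((p ω : ℂ) * (p ω' : ℂ) * (hatv v ω i * (starRingEnd ℂ) (hatv v ω j)
              * ((starRingEnd ℂ) (hatv v ω' l) * hatv v ω' k)))
            * ∑ m, hatv v ω m * (starRingEnd ℂ) (hatv v ω' m) := by
          refine Finset.sum_congr rfl fun ω _ => Finset.sum_congr rfl fun ω' _ => ?_
          rw [Finset.mul_sum]
          exact Finset.sum_congr rfl fun m _ => by ring
      _ = ∑ ω, ((p ω : ℂ) * (p ω : ℂ) * (hatv v ω i * (starRingEnd ℂ) (hatv v ω j)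
              * ((starRingEnd ℂ) (hatv v ω l) * hatv v ω k))) * ((p ω : ℂ))⁻¹ := collapse _
      _ = ∑ ω, (p ω : ℂ) * (hatv v ω i * hatv v ω k
              * (starRingEnd ℂ) (hatv v ω j) * (starRingEnd ℂ) (hatv v ω l)) := by
          refine Finset.sum_congr rfl fun ω _ => ?_
          field_simp [hpne ω]
  refine ⟨?_, ?_, ?_, ?_⟩
  · intro i k
    have := orth i k
    simpa [tensorS, hatv_zero, mul_one] using this
  · intro i j k
    simp only [tensorS]
    exact Finset.sum_congr rfl fun ω _ => by ring
  · intro i j k l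
    rw [hc3, hc3]
    exact Finset.sum_congr rfl fun ω _ => by ring
  · intro i j k l
    rw [hd3, hd3]
    exact Finset.sum_congr rfl fun ω _ => by ring
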